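/- Let 0<x<1, r>1, and 0<s<2. The product ∘ is associative: for all positive integers m,n,l and all functions f_m, f_n, f_l of m (respectively n, l) pairs of variables, each symmetric in its z-variables and in its w-variables, one has ((f_m ∘ f_n) ∘ f_l)(z_1,…,z_{m+n+l}|w_1,…,w_{m+n+l}) = (f_m ∘ (f_n ∘ f_l))(z_1,…,z_{m+n+l}|w_1,…,w_{m+n+l}) at every point (u_1,…,u_{m+n+l},v_1,…,v_{m+n+l})∈ℂ^{2(m+n+l)} at which all theta factors appearing in the denominators of both sides are nonzero. -/

import Mathlib

open Finset Equiv

noncomputable def pochInf (q z : ℂ) : ℂ := ∏' j : ℕ, (1 - q ^ j * z)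

noncomputable def thetaFn (q z : ℂ) : ℂ := pochInf q q * pochInf q z * pochInf q (q / z)

noncomputable def jt (x ρ : ℝ) (u : ℂ) : ℂ :=
  (x : ℂ) ^ (u ^ 2 / (ρ : ℂ) - u) * thetaFn ((x : ℂ) ^ ((2 * ρ : ℝ) : ℂ)) ((x : ℂ) ^ (2 * u)) /
    pochInf ((x : ℂ) ^ ((2 * ρ : ℝ) : ℂ)) ((x : ℂ) ^ ((2 * ρ : ℝ) : ℂ)) ^ 3

noncomputable def circProd (x r s : ℝ) (m n : ℕ)
    (f : (Fin m → ℂ) → (Fin m → ℂ) → ℂ) (g : (Fin n → ℂ) → (Fin n → ℂ) → ℂ)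
    (u v : Fin (m + n) → ℂ) : ℂ :=
  (1 / ((Nat.factorial (m + n) : ℂ)) ^ 2) *
    ∑ σ : Equiv.Perm (Fin (m + n)), ∑ τ : Equiv.Perm (Fin (m + n)),
      f (fun i => u (σ (Fin.castAdd n i))) (fun i => v (τ (Fin.castAdd n i))) *
      g (fun j => u (σ (Fin.natAdd m j))) (fun j => v (τ (Fin.natAdd m j))) *
      ∏ i : Fin m, ∏ j : Fin n,
        (jt x r (v (τ (Fin.castAdd n i)) - u (σ (Fin.natAdd m j)) + (s : ℂ) / 2) *
            jt x r (u (σ (Fin.castAdd n i)) - v (τ (Fin.natAdd m j)) + (s : ℂ) / 2) *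
            jt x r (u (σ (Fin.natAdd m j)) - v (τ (Fin.castAdd n i)) + (s : ℂ) / 2 - 1) *
            jt x r (v (τ (Fin.natAdd m j)) - u (σ (Fin.castAdd n i)) + (s : ℂ) / 2 - 1)) /
        (jt x r (u (σ (Fin.castAdd n i)) - u (σ (Fin.natAdd m j))) *
            jt x r (u (σ (Fin.natAdd m j)) - u (σ (Fin.castAdd n i)) - 1) *
            jt x r (v (τ (Fin.castAdd n i)) - v (τ (Fin.natAdd m j))) *
            jt x r (v (τ (Fin.natAdd m j)) - v (τ (Fin.castAdd n i)) - 1))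

/-! ### Auxiliary machinery for the associativity proof -/

/-- Numerator factor pairing a `u`-value with a `v`-value. -/
noncomputable def Afac (x r s : ℝ) (a d : ℂ) : ℂ :=
  jt x r (a - d + (s : ℂ) / 2) * jt x r (d - a + (s : ℂ) / 2 - 1)

/-- Numerator factor pairing a `v`-value with a `u`-value. -/
noncomputable def Bfac (x r s : ℝ) (b c : ℂ) : ℂ :=
  jt x r (b - c + (s : ℂ) / 2) * jt x r (c - b + (s : ℂ) / 2 - 1)

/-- Denominator factor. -/
noncomputable def Dfac (x r : ℝ) (a c : ℂ) : ℂ := jt x r (a - c) * jt x r (c - a - 1)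

/-- The full interaction kernel between a pair `(a,b)` and a pair `(c,d)`. -/
noncomputable def Kf (x r s : ℝ) (a b c d : ℂ) : ℂ :=
  Afac x r s a d * Bfac x r s b c * (Dfac x r a c)⁻¹ * (Dfac x r b d)⁻¹

lemma factor_eq (x r s : ℝ) (a b c d : ℂ) :
    jt x r (b - c + (s : ℂ) / 2) * jt x r (a - d + (s : ℂ) / 2) *
        jt x r (c - b + (s : ℂ) / 2 - 1) * jt x r (d - a + (s : ℂ) / 2 - 1) /
      (jt x r (a - c) * jt x r (c - a - 1) * jt x r (b - d) * jt x r (d - b - 1))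
      = Kf x r s a b c d := by
  simp only [Kf, Afac, Bfac, Dfac, div_eq_mul_inv, mul_inv]
  ring

/-- The unsymmetrized summand of `circProd`. -/
noncomputable def Phi (x r s : ℝ) (m n : ℕ)
    (f : (Fin m → ℂ) → (Fin m → ℂ) → ℂ) (g : (Fin n → ℂ) → (Fin n → ℂ) → ℂ)
    (a b : Fin (m + n) → ℂ) : ℂ :=
  f (fun i => a (Fin.castAdd n i)) (fun i => b (Fin.castAdd n i)) *
  g (fun j => a (Fin.natAdd m j)) (fun j => b (Fin.natAdd m j)) *
  ∏ i : Fin m, ∏ j : Fin n,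
    Kf x r s (a (Fin.castAdd n i)) (b (Fin.castAdd n i)) (a (Fin.natAdd m j)) (b (Fin.natAdd m j))

lemma circProd_eq_Phi (x r s : ℝ) (m n : ℕ)
    (f : (Fin m → ℂ) → (Fin m → ℂ) → ℂ) (g : (Fin n → ℂ) → (Fin n → ℂ) → ℂ)
    (A B : Fin (m + n) → ℂ) :
    circProd x r s m n f g A B
      = (1 / ((Nat.factorial (m + n) : ℂ)) ^ 2) *
          ∑ σ : Perm (Fin (m + n)), ∑ τ : Perm (Fin (m + n)),
            Phi x r s m n f g (fun i => A (σ i)) (fun i => B (τ i)) := by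
  simp only [circProd, Phi, factor_eq]

lemma circProd_expand (x r s : ℝ) (M L : ℕ)
    (F : (Fin M → ℂ) → (Fin M → ℂ) → ℂ) (G : (Fin L → ℂ) → (Fin L → ℂ) → ℂ)
    (u v : Fin (M + L) → ℂ) :
    circProd x r s M L F G u v
      = (1 / ((Nat.factorial (M + L) : ℂ)) ^ 2) *
          ∑ σ : Perm (Fin (M + L)), ∑ τ : Perm (Fin (M + L)),
            F (fun i => u (σ (Fin.castAdd L i))) (fun i => v (τ (Fin.castAdd L i))) *
            G (fun j => u (σ (Fin.natAdd M j))) (fun j => v (τ (Fin.natAdd M j))) *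
            ∏ i : Fin M, ∏ j : Fin L,
              Kf x r s (u (σ (Fin.castAdd L i))) (v (τ (Fin.castAdd L i)))
                (u (σ (Fin.natAdd M j))) (v (τ (Fin.natAdd M j))) := by
  simp only [circProd, factor_eq]

section emb
variable {M L : ℕ}

/-- Embedding of a permutation of the first block into `Perm (Fin (M + L))`. -/
def embL (M L : ℕ) (ρ : Perm (Fin M)) : Perm (Fin (M + L)) :=
  finSumFinEquiv.permCongr (Equiv.sumCongr ρ (Equiv.refl (Fin L)))

/-- Embedding of a permutation of the second block into `Perm (Fin (M + L))`. -/
def embR (M L : ℕ) (ρ : Perm (Fin L)) : Perm (Fin (M + L)) :=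
  finSumFinEquiv.permCongr (Equiv.sumCongr (Equiv.refl (Fin M)) ρ)

@[simp] lemma embL_castAdd (ρ : Perm (Fin M)) (i : Fin M) :
    embL M L ρ (Fin.castAdd L i) = Fin.castAdd L (ρ i) := by
  simp [embL]

@[simp] lemma embL_natAdd (ρ : Perm (Fin M)) (j : Fin L) :
    embL M L ρ (Fin.natAdd M j) = Fin.natAdd M j := by
  simp [embL]

@[simp] lemma embR_castAdd (ρ : Perm (Fin L)) (i : Fin M) :
    embR M L ρ (Fin.castAdd L i) = Fin.castAdd L i := by
  simp [embR]

@[simp] lemma embR_natAdd (ρ : Perm (Fin L)) (j : Fin L) :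
    embR M L ρ (Fin.natAdd M j) = Fin.natAdd M (ρ j) := by
  simp [embR]

end emb

section prodK
variable {x r s : ℝ} {M L : ℕ}

lemma prod_Kf_left (a b : Fin M → ℂ) (c d : Fin L → ℂ) (ρ π : Perm (Fin M)) :
    (∏ i : Fin M, ∏ j : Fin L, Kf x r s (a (ρ i)) (b (π i)) (c j) (d j))
      = ∏ i : Fin M, ∏ j : Fin L, Kf x r s (a i) (b i) (c j) (d j) := by
  have split : ∀ a b : Fin M → ℂ,
      (∏ i : Fin M, ∏ j : Fin L, Kf x r s (a i) (b i) (c j) (d j))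
        = (∏ i : Fin M, ∏ j : Fin L, Afac x r s (a i) (d j)) *
          (∏ i : Fin M, ∏ j : Fin L, Bfac x r s (b i) (c j)) *
          (∏ i : Fin M, ∏ j : Fin L, (Dfac x r (a i) (c j))⁻¹) *
          (∏ i : Fin M, ∏ j : Fin L, (Dfac x r (b i) (d j))⁻¹) := by
    intro a b
    simp only [Kf, Finset.prod_mul_distrib]
  calc (∏ i : Fin M, ∏ j : Fin L, Kf x r s (a (ρ i)) (b (π i)) (c j) (d j))
      = (∏ i : Fin M, ∏ j : Fin L, Afac x r s (a (ρ i)) (d j)) *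
        (∏ i : Fin M, ∏ j : Fin L, Bfac x r s (b (π i)) (c j)) *
        (∏ i : Fin M, ∏ j : Fin L, (Dfac x r (a (ρ i)) (c j))⁻¹) *
        (∏ i : Fin M, ∏ j : Fin L, (Dfac x r (b (π i)) (d j))⁻¹) :=
        split (fun i => a (ρ i)) (fun i => b (π i))
    _ = (∏ i : Fin M, ∏ j : Fin L, Afac x r s (a i) (d j)) *
        (∏ i : Fin M, ∏ j : Fin L, Bfac x r s (b i) (c j)) *
        (∏ i : Fin M, ∏ j : Fin L, (Dfac x r (a i) (c j))⁻¹) *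
        (∏ i : Fin M, ∏ j : Fin L, (Dfac x r (b i) (d j))⁻¹) := by
        rw [Fintype.prod_equiv ρ _ (fun i => ∏ j : Fin L, Afac x r s (a i) (d j)) (fun i => rfl),
          Fintype.prod_equiv π _ (fun i => ∏ j : Fin L, Bfac x r s (b i) (c j)) (fun i => rfl),
          Fintype.prod_equiv ρ _ (fun i => ∏ j : Fin L, (Dfac x r (a i) (c j))⁻¹) (fun i => rfl),
          Fintype.prod_equiv π _ (fun i => ∏ j : Fin L, (Dfac x r (b i) (d j))⁻¹) (fun i => rfl)]
    _ = ∏ i : Fin M, ∏ j : Fin L, Kf x r s (a i) (b i) (c j) (d j) := (split a b).symm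

lemma prod_Kf_right (a b : Fin M → ℂ) (c d : Fin L → ℂ) (ρ π : Perm (Fin L)) :
    (∏ i : Fin M, ∏ j : Fin L, Kf x r s (a i) (b i) (c (ρ j)) (d (π j)))
      = ∏ i : Fin M, ∏ j : Fin L, Kf x r s (a i) (b i) (c j) (d j) := by
  refine Finset.prod_congr rfl fun i _ => ?_
  have split : ∀ c d : Fin L → ℂ,
      (∏ j : Fin L, Kf x r s (a i) (b i) (c j) (d j))
        = (∏ j : Fin L, Afac x r s (a i) (d j)) * (∏ j : Fin L, Bfac x r s (b i) (c j)) *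
          (∏ j : Fin L, (Dfac x r (a i) (c j))⁻¹) * (∏ j : Fin L, (Dfac x r (b i) (d j))⁻¹) := by
    intro c d
    simp only [Kf, Finset.prod_mul_distrib]
  calc (∏ j : Fin L, Kf x r s (a i) (b i) (c (ρ j)) (d (π j)))
      = (∏ j : Fin L, Afac x r s (a i) (d (π j))) * (∏ j : Fin L, Bfac x r s (b i) (c (ρ j))) *
        (∏ j : Fin L, (Dfac x r (a i) (c (ρ j)))⁻¹) *
        (∏ j : Fin L, (Dfac x r (b i) (d (π j)))⁻¹) :=
        split (fun j => c (ρ j)) (fun j => d (π j))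
    _ = (∏ j : Fin L, Afac x r s (a i) (d j)) * (∏ j : Fin L, Bfac x r s (b i) (c j)) *
        (∏ j : Fin L, (Dfac x r (a i) (c j))⁻¹) * (∏ j : Fin L, (Dfac x r (b i) (d j))⁻¹) := by
        rw [Fintype.prod_equiv π _ (fun j => Afac x r s (a i) (d j)) (fun j => rfl),
          Fintype.prod_equiv ρ _ (fun j => Bfac x r s (b i) (c j)) (fun j => rfl),
          Fintype.prod_equiv ρ _ (fun j => (Dfac x r (a i) (c j))⁻¹) (fun j => rfl),
          Fintype.prod_equiv π _ (fun j => (Dfac x r (b i) (d j))⁻¹) (fun j => rfl)]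
    _ = ∏ j : Fin L, Kf x r s (a i) (b i) (c j) (d j) := (split c d).symm

end prodK

lemma absorb {M N : ℕ} (e : Perm (Fin M) → Perm (Fin N)) (c : Fin M → Fin N)
    (Φ : (Fin M → ℂ) → (Fin M → ℂ) → ℂ)
    (Ψ : Perm (Fin N) → Perm (Fin N) → ℂ)
    (hec : ∀ (ρ : Perm (Fin M)) (i : Fin M), e ρ (c i) = c (ρ i))
    (hΨ : ∀ (σ τ : Perm (Fin N)) (ρ π : Perm (Fin M)), Ψ (σ * e ρ) (τ * e π) = Ψ σ τ)
    (u v : Fin N → ℂ) :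
    (∑ σ : Perm (Fin N), ∑ τ : Perm (Fin N),
      ((1 / ((Nat.factorial M : ℂ)) ^ 2) *
        ∑ ρ : Perm (Fin M), ∑ π : Perm (Fin M),
          Φ (fun i => u (σ (c (ρ i)))) (fun i => v (τ (c (π i))))) * Ψ σ τ)
    = ∑ σ : Perm (Fin N), ∑ τ : Perm (Fin N),
        Φ (fun i => u (σ (c i))) (fun i => v (τ (c i))) * Ψ σ τ := by
  have hMfac : ((Nat.factorial M : ℂ)) ≠ 0 := by
    exact_mod_cast Nat.cast_ne_zero.2 (Nat.factorial_ne_zero M)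
  set F : Perm (Fin N) → Perm (Fin N) → ℂ :=
    fun σ τ => Φ (fun i => u (σ (c i))) (fun i => v (τ (c i))) * Ψ σ τ with hF
  have key : ∀ ρ π : Perm (Fin M),
      (∑ σ : Perm (Fin N), ∑ τ : Perm (Fin N),
        Φ (fun i => u (σ (c (ρ i)))) (fun i => v (τ (c (π i)))) * Ψ σ τ)
      = ∑ σ : Perm (Fin N), ∑ τ : Perm (Fin N), F σ τ := by
    intro ρ π
    have h1 : ∀ σ τ : Perm (Fin N),
        Φ (fun i => u (σ (c (ρ i)))) (fun i => v (τ (c (π i)))) * Ψ σ τ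
          = F (σ * e ρ) (τ * e π) := by
      intro σ τ
      rw [hF]
      simp only [Perm.mul_apply, hec, hΨ]
    calc (∑ σ : Perm (Fin N), ∑ τ : Perm (Fin N),
            Φ (fun i => u (σ (c (ρ i)))) (fun i => v (τ (c (π i)))) * Ψ σ τ)
        = ∑ σ : Perm (Fin N), ∑ τ : Perm (Fin N), F (σ * e ρ) (τ * e π) :=
          Finset.sum_congr rfl fun σ _ => Finset.sum_congr rfl fun τ _ => h1 σ τ
      _ = ∑ σ : Perm (Fin N), ∑ τ : Perm (Fin N), F (σ * e ρ) τ :=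
          Finset.sum_congr rfl fun σ _ => Equiv.sum_comp (Equiv.mulRight (e π)) (F (σ * e ρ))
      _ = ∑ σ : Perm (Fin N), ∑ τ : Perm (Fin N), F σ τ :=
          Equiv.sum_comp (Equiv.mulRight (e ρ)) (fun σ => ∑ τ : Perm (Fin N), F σ τ)
  have expand : ∀ σ τ : Perm (Fin N),
      ((1 / ((Nat.factorial M : ℂ)) ^ 2) *
        ∑ ρ : Perm (Fin M), ∑ π : Perm (Fin M),
          Φ (fun i => u (σ (c (ρ i)))) (fun i => v (τ (c (π i))))) * Ψ σ τ
      = (1 / ((Nat.factorial M : ℂ)) ^ 2) *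
          ∑ ρ : Perm (Fin M), ∑ π : Perm (Fin M),
            Φ (fun i => u (σ (c (ρ i)))) (fun i => v (τ (c (π i)))) * Ψ σ τ := by
    intro σ τ
    rw [mul_assoc, Finset.sum_mul]
    congr 1
    exact Finset.sum_congr rfl fun ρ _ => Finset.sum_mul _ _ _
  calc (∑ σ : Perm (Fin N), ∑ τ : Perm (Fin N),
        ((1 / ((Nat.factorial M : ℂ)) ^ 2) *
          ∑ ρ : Perm (Fin M), ∑ π : Perm (Fin M),
            Φ (fun i => u (σ (c (ρ i)))) (fun i => v (τ (c (π i))))) * Ψ σ τ)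
      = (1 / ((Nat.factorial M : ℂ)) ^ 2) *
          ∑ σ : Perm (Fin N), ∑ τ : Perm (Fin N), ∑ ρ : Perm (Fin M), ∑ π : Perm (Fin M),
            Φ (fun i => u (σ (c (ρ i)))) (fun i => v (τ (c (π i)))) * Ψ σ τ := by
        rw [Finset.mul_sum]
        refine Finset.sum_congr rfl fun σ _ => ?_
        rw [Finset.mul_sum]
        exact Finset.sum_congr rfl fun τ _ => expand σ τ
    _ = (1 / ((Nat.factorial M : ℂ)) ^ 2) *
          ∑ ρ : Perm (Fin M), ∑ π : Perm (Fin M), ∑ σ : Perm (Fin N), ∑ τ : Perm (Fin N),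
            Φ (fun i => u (σ (c (ρ i)))) (fun i => v (τ (c (π i)))) * Ψ σ τ := by
        congr 1
        have h1 : ∀ σ : Perm (Fin N),
            (∑ τ : Perm (Fin N), ∑ ρ : Perm (Fin M), ∑ π : Perm (Fin M),
              Φ (fun i => u (σ (c (ρ i)))) (fun i => v (τ (c (π i)))) * Ψ σ τ)
            = ∑ ρ : Perm (Fin M), ∑ τ : Perm (Fin N), ∑ π : Perm (Fin M),
              Φ (fun i => u (σ (c (ρ i)))) (fun i => v (τ (c (π i)))) * Ψ σ τ :=
          fun σ => Finset.sum_comm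
        simp only [h1]
        have h2 : ∀ (σ : Perm (Fin N)) (ρ : Perm (Fin M)),
            (∑ τ : Perm (Fin N), ∑ π : Perm (Fin M),
              Φ (fun i => u (σ (c (ρ i)))) (fun i => v (τ (c (π i)))) * Ψ σ τ)
            = ∑ π : Perm (Fin M), ∑ τ : Perm (Fin N),
              Φ (fun i => u (σ (c (ρ i)))) (fun i => v (τ (c (π i)))) * Ψ σ τ :=
          fun σ ρ => Finset.sum_comm
        simp only [h2]
        rw [Finset.sum_comm]
        exact Finset.sum_congr rfl fun ρ _ => Finset.sum_comm
    _ = (1 / ((Nat.factorial M : ℂ)) ^ 2) *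
          ∑ ρ : Perm (Fin M), ∑ π : Perm (Fin M), ∑ σ : Perm (Fin N), ∑ τ : Perm (Fin N),
            F σ τ := by
        congr 1
        exact Finset.sum_congr rfl fun ρ _ => Finset.sum_congr rfl fun π _ => key ρ π
    _ = ∑ σ : Perm (Fin N), ∑ τ : Perm (Fin N), F σ τ := by
        rw [Finset.sum_const, Finset.sum_const, Finset.card_univ, Fintype.card_perm,
          Fintype.card_fin, nsmul_eq_mul, nsmul_eq_mul]
        field_simp


section castlemmas
variable {m n l : ℕ}

lemma castCastSymm {a b : ℕ} (h : a = b) (w : Fin a) :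
    Fin.cast h.symm (Fin.cast h w) = w := by
  ext; simp

lemma castArg1 (i : Fin m) :
    Fin.cast (Nat.add_assoc m n l).symm (Fin.castAdd (n + l) i)
      = Fin.castAdd l (Fin.castAdd n i) := by
  ext; simp

lemma castArg2 (j : Fin n) :
    Fin.cast (Nat.add_assoc m n l).symm (Fin.natAdd m (Fin.castAdd l j))
      = Fin.castAdd l (Fin.natAdd m j) := by
  ext; simp

lemma castArg3 (k : Fin l) :
    Fin.cast (Nat.add_assoc m n l).symm (Fin.natAdd m (Fin.natAdd n k))
      = Fin.natAdd (m + n) k := by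
  ext; simp [Nat.add_assoc]

end castlemmas

set_option maxHeartbeats 2000000 in
/-- Associativity of the Feigin–Odesskii product `∘`: for symmetric functions
`f`, `g`, `h` of `m`, `n`, `l` pairs of variables, `(f ∘ g) ∘ h = f ∘ (g ∘ h)` at every
point where all theta factors appearing in the denominators of both sides are nonzero. -/
theorem circProd_assoc (x r s : ℝ) (hx0 : 0 < x) (hx1 : x < 1) (hr : 1 < r)
    (hs0 : 0 < s) (hs2 : s < 2) (m n l : ℕ) (hm : 0 < m) (hn : 0 < n) (hl : 0 < l)
    (f : (Fin m → ℂ) → (Fin m → ℂ) → ℂ)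
    (g : (Fin n → ℂ) → (Fin n → ℂ) → ℂ)
    (h : (Fin l → ℂ) → (Fin l → ℂ) → ℂ)
    (hf : ∀ (σ τ : Equiv.Perm (Fin m)) (a b : Fin m → ℂ), f (a ∘ σ) (b ∘ τ) = f a b)
    (hg : ∀ (σ τ : Equiv.Perm (Fin n)) (a b : Fin n → ℂ), g (a ∘ σ) (b ∘ τ) = g a b)
    (hh : ∀ (σ τ : Equiv.Perm (Fin l)) (a b : Fin l → ℂ), h (a ∘ σ) (b ∘ τ) = h a b)
    (u v : Fin (m + n + l) → ℂ)
    (hu : ∀ p q : Fin (m + n + l), p ≠ q →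
      jt x r (u p - u q) ≠ 0 ∧ jt x r (u p - u q - 1) ≠ 0)
    (hv : ∀ p q : Fin (m + n + l), p ≠ q →
      jt x r (v p - v q) ≠ 0 ∧ jt x r (v p - v q - 1) ≠ 0) :
    circProd x r s (m + n) l (circProd x r s m n f g) h u v =
      circProd x r s m (n + l) f (circProd x r s n l g h)
        (fun i => u (Fin.cast (Nat.add_assoc m n l).symm i))
        (fun i => v (Fin.cast (Nat.add_assoc m n l).symm i)) := by
  classical
  -- the common trisymmetrized form
  have hL : circProd x r s (m + n) l (circProd x r s m n f g) h u v
      = (1 / ((Nat.factorial (m + n + l) : ℂ)) ^ 2) *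
          ∑ σ : Perm (Fin (m + n + l)), ∑ τ : Perm (Fin (m + n + l)),
            f (fun i => u (σ (Fin.castAdd l (Fin.castAdd n i))))
              (fun i => v (τ (Fin.castAdd l (Fin.castAdd n i)))) *
            g (fun i => u (σ (Fin.castAdd l (Fin.natAdd m i))))
              (fun i => v (τ (Fin.castAdd l (Fin.natAdd m i)))) *
            h (fun i => u (σ (Fin.natAdd (m + n) i))) (fun i => v (τ (Fin.natAdd (m + n) i))) *
            ((∏ i : Fin m, ∏ j : Fin n,
                Kf x r s (u (σ (Fin.castAdd l (Fin.castAdd n i))))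
                  (v (τ (Fin.castAdd l (Fin.castAdd n i))))
                  (u (σ (Fin.castAdd l (Fin.natAdd m j))))
                  (v (τ (Fin.castAdd l (Fin.natAdd m j))))) *
             (∏ i : Fin m, ∏ j : Fin l,
                Kf x r s (u (σ (Fin.castAdd l (Fin.castAdd n i))))
                  (v (τ (Fin.castAdd l (Fin.castAdd n i))))
                  (u (σ (Fin.natAdd (m + n) j))) (v (τ (Fin.natAdd (m + n) j)))) *
             (∏ i : Fin n, ∏ j : Fin l,
                Kf x r s (u (σ (Fin.castAdd l (Fin.natAdd m i))))
                  (v (τ (Fin.castAdd l (Fin.natAdd m i))))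
                  (u (σ (Fin.natAdd (m + n) j))) (v (τ (Fin.natAdd (m + n) j))))) := by
    rw [circProd_expand]
    simp only [circProd_eq_Phi]
    congr 1
    have hPsiL : ∀ (σ τ : Perm (Fin (m + n + l))) (ρ π : Perm (Fin (m + n))),
        (h (fun j => u ((σ * embL (m + n) l ρ) (Fin.natAdd (m + n) j)))
            (fun j => v ((τ * embL (m + n) l π) (Fin.natAdd (m + n) j))) *
          ∏ i : Fin (m + n), ∏ j : Fin l,
            Kf x r s (u ((σ * embL (m + n) l ρ) (Fin.castAdd l i)))
              (v ((τ * embL (m + n) l π) (Fin.castAdd l i)))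
              (u ((σ * embL (m + n) l ρ) (Fin.natAdd (m + n) j)))
              (v ((τ * embL (m + n) l π) (Fin.natAdd (m + n) j))))
        = h (fun j => u (σ (Fin.natAdd (m + n) j))) (fun j => v (τ (Fin.natAdd (m + n) j))) *
          ∏ i : Fin (m + n), ∏ j : Fin l,
            Kf x r s (u (σ (Fin.castAdd l i))) (v (τ (Fin.castAdd l i)))
              (u (σ (Fin.natAdd (m + n) j))) (v (τ (Fin.natAdd (m + n) j))) := by
      intro σ τ ρ π
      simp only [Perm.mul_apply, embL_castAdd, embL_natAdd]
      congr 1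
      exact prod_Kf_left (fun i => u (σ (Fin.castAdd l i))) (fun i => v (τ (Fin.castAdd l i)))
        (fun j => u (σ (Fin.natAdd (m + n) j))) (fun j => v (τ (Fin.natAdd (m + n) j))) ρ π
    calc (∑ σ : Perm (Fin (m + n + l)), ∑ τ : Perm (Fin (m + n + l)),
            ((1 / ((Nat.factorial (m + n) : ℂ)) ^ 2) *
              ∑ ρ : Perm (Fin (m + n)), ∑ π : Perm (Fin (m + n)),
                Phi x r s m n f g (fun i => u (σ (Fin.castAdd l (ρ i))))
                  (fun i => v (τ (Fin.castAdd l (π i))))) *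
            h (fun j => u (σ (Fin.natAdd (m + n) j))) (fun j => v (τ (Fin.natAdd (m + n) j))) *
            ∏ i : Fin (m + n), ∏ j : Fin l,
              Kf x r s (u (σ (Fin.castAdd l i))) (v (τ (Fin.castAdd l i)))
                (u (σ (Fin.natAdd (m + n) j))) (v (τ (Fin.natAdd (m + n) j))))
        = ∑ σ : Perm (Fin (m + n + l)), ∑ τ : Perm (Fin (m + n + l)),
            ((1 / ((Nat.factorial (m + n) : ℂ)) ^ 2) *
              ∑ ρ : Perm (Fin (m + n)), ∑ π : Perm (Fin (m + n)),
                Phi x r s m n f g (fun i => u (σ (Fin.castAdd l (ρ i))))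
                  (fun i => v (τ (Fin.castAdd l (π i))))) *
            (h (fun j => u (σ (Fin.natAdd (m + n) j))) (fun j => v (τ (Fin.natAdd (m + n) j))) *
             ∏ i : Fin (m + n), ∏ j : Fin l,
               Kf x r s (u (σ (Fin.castAdd l i))) (v (τ (Fin.castAdd l i)))
                 (u (σ (Fin.natAdd (m + n) j))) (v (τ (Fin.natAdd (m + n) j)))) :=
          Finset.sum_congr rfl fun σ _ => Finset.sum_congr rfl fun τ _ => mul_assoc _ _ _
      _ = ∑ σ : Perm (Fin (m + n + l)), ∑ τ : Perm (Fin (m + n + l)),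
            Phi x r s m n f g (fun i => u (σ (Fin.castAdd l i)))
              (fun i => v (τ (Fin.castAdd l i))) *
            (h (fun j => u (σ (Fin.natAdd (m + n) j))) (fun j => v (τ (Fin.natAdd (m + n) j))) *
             ∏ i : Fin (m + n), ∏ j : Fin l,
               Kf x r s (u (σ (Fin.castAdd l i))) (v (τ (Fin.castAdd l i)))
                 (u (σ (Fin.natAdd (m + n) j))) (v (τ (Fin.natAdd (m + n) j)))) :=
          absorb (embL (m + n) l) (Fin.castAdd l) (Phi x r s m n f g)
            (fun σ τ =>
              h (fun j => u (σ (Fin.natAdd (m + n) j))) (fun j => v (τ (Fin.natAdd (m + n) j))) *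
              ∏ i : Fin (m + n), ∏ j : Fin l,
                Kf x r s (u (σ (Fin.castAdd l i))) (v (τ (Fin.castAdd l i)))
                  (u (σ (Fin.natAdd (m + n) j))) (v (τ (Fin.natAdd (m + n) j))))
            (fun ρ i => embL_castAdd ρ i) hPsiL u v
      _ = _ := by
          refine Finset.sum_congr rfl fun σ _ => Finset.sum_congr rfl fun τ _ => ?_
          simp only [Phi, Fin.prod_univ_add, Finset.prod_mul_distrib]
          ring
  have hR : circProd x r s m (n + l) f (circProd x r s n l g h)
        (fun i => u (Fin.cast (Nat.add_assoc m n l).symm i))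
        (fun i => v (Fin.cast (Nat.add_assoc m n l).symm i))
      = (1 / ((Nat.factorial (m + n + l) : ℂ)) ^ 2) *
          ∑ σ : Perm (Fin (m + n + l)), ∑ τ : Perm (Fin (m + n + l)),
            f (fun i => u (σ (Fin.castAdd l (Fin.castAdd n i))))
              (fun i => v (τ (Fin.castAdd l (Fin.castAdd n i)))) *
            g (fun i => u (σ (Fin.castAdd l (Fin.natAdd m i))))
              (fun i => v (τ (Fin.castAdd l (Fin.natAdd m i)))) *
            h (fun i => u (σ (Fin.natAdd (m + n) i))) (fun i => v (τ (Fin.natAdd (m + n) i))) *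
            ((∏ i : Fin m, ∏ j : Fin n,
                Kf x r s (u (σ (Fin.castAdd l (Fin.castAdd n i))))
                  (v (τ (Fin.castAdd l (Fin.castAdd n i))))
                  (u (σ (Fin.castAdd l (Fin.natAdd m j))))
                  (v (τ (Fin.castAdd l (Fin.natAdd m j))))) *
             (∏ i : Fin m, ∏ j : Fin l,
                Kf x r s (u (σ (Fin.castAdd l (Fin.castAdd n i))))
                  (v (τ (Fin.castAdd l (Fin.castAdd n i))))
                  (u (σ (Fin.natAdd (m + n) j))) (v (τ (Fin.natAdd (m + n) j)))) *
             (∏ i : Fin n, ∏ j : Fin l,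
                Kf x r s (u (σ (Fin.castAdd l (Fin.natAdd m i))))
                  (v (τ (Fin.castAdd l (Fin.natAdd m i))))
                  (u (σ (Fin.natAdd (m + n) j))) (v (τ (Fin.natAdd (m + n) j))))) := by
    rw [circProd_expand]
    simp only [circProd_eq_Phi]
    have hfact : ((Nat.factorial (m + (n + l)) : ℂ)) = (Nat.factorial (m + n + l) : ℂ) := by
      rw [Nat.add_assoc]
    rw [hfact]
    congr 1
    have hPsiR : ∀ (σ τ : Perm (Fin (m + (n + l)))) (ρ π : Perm (Fin (n + l))),
        (f (fun i => u (Fin.cast (Nat.add_assoc m n l).symm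
              ((σ * embR m (n + l) ρ) (Fin.castAdd (n + l) i))))
            (fun i => v (Fin.cast (Nat.add_assoc m n l).symm
              ((τ * embR m (n + l) π) (Fin.castAdd (n + l) i)))) *
          ∏ i : Fin m, ∏ j : Fin (n + l),
            Kf x r s
              (u (Fin.cast (Nat.add_assoc m n l).symm
                ((σ * embR m (n + l) ρ) (Fin.castAdd (n + l) i))))
              (v (Fin.cast (Nat.add_assoc m n l).symm
                ((τ * embR m (n + l) π) (Fin.castAdd (n + l) i))))
              (u (Fin.cast (Nat.add_assoc m n l).symm
                ((σ * embR m (n + l) ρ) (Fin.natAdd m j))))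
              (v (Fin.cast (Nat.add_assoc m n l).symm
                ((τ * embR m (n + l) π) (Fin.natAdd m j)))))
        = f (fun i => u (Fin.cast (Nat.add_assoc m n l).symm (σ (Fin.castAdd (n + l) i))))
            (fun i => v (Fin.cast (Nat.add_assoc m n l).symm (τ (Fin.castAdd (n + l) i)))) *
          ∏ i : Fin m, ∏ j : Fin (n + l),
            Kf x r s
              (u (Fin.cast (Nat.add_assoc m n l).symm (σ (Fin.castAdd (n + l) i))))
              (v (Fin.cast (Nat.add_assoc m n l).symm (τ (Fin.castAdd (n + l) i))))
              (u (Fin.cast (Nat.add_assoc m n l).symm (σ (Fin.natAdd m j))))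
              (v (Fin.cast (Nat.add_assoc m n l).symm (τ (Fin.natAdd m j)))) := by
      intro σ τ ρ π
      simp only [Perm.mul_apply, embR_castAdd, embR_natAdd]
      congr 1
      exact prod_Kf_right
        (fun i => u (Fin.cast (Nat.add_assoc m n l).symm (σ (Fin.castAdd (n + l) i))))
        (fun i => v (Fin.cast (Nat.add_assoc m n l).symm (τ (Fin.castAdd (n + l) i))))
        (fun j => u (Fin.cast (Nat.add_assoc m n l).symm (σ (Fin.natAdd m j))))
        (fun j => v (Fin.cast (Nat.add_assoc m n l).symm (τ (Fin.natAdd m j)))) ρ π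
    calc (∑ σ : Perm (Fin (m + (n + l))), ∑ τ : Perm (Fin (m + (n + l))),
            f (fun i => u (Fin.cast (Nat.add_assoc m n l).symm (σ (Fin.castAdd (n + l) i))))
              (fun i => v (Fin.cast (Nat.add_assoc m n l).symm (τ (Fin.castAdd (n + l) i)))) *
            ((1 / ((Nat.factorial (n + l) : ℂ)) ^ 2) *
              ∑ ρ : Perm (Fin (n + l)), ∑ π : Perm (Fin (n + l)),
                Phi x r s n l g h
                  (fun i => u (Fin.cast (Nat.add_assoc m n l).symm (σ (Fin.natAdd m (ρ i)))))
                  (fun i => v (Fin.cast (Nat.add_assoc m n l).symm (τ (Fin.natAdd m (π i)))))) *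
            ∏ i : Fin m, ∏ j : Fin (n + l),
              Kf x r s
                (u (Fin.cast (Nat.add_assoc m n l).symm (σ (Fin.castAdd (n + l) i))))
                (v (Fin.cast (Nat.add_assoc m n l).symm (τ (Fin.castAdd (n + l) i))))
                (u (Fin.cast (Nat.add_assoc m n l).symm (σ (Fin.natAdd m j))))
                (v (Fin.cast (Nat.add_assoc m n l).symm (τ (Fin.natAdd m j)))))
        = ∑ σ : Perm (Fin (m + (n + l))), ∑ τ : Perm (Fin (m + (n + l))),
            ((1 / ((Nat.factorial (n + l) : ℂ)) ^ 2) *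
              ∑ ρ : Perm (Fin (n + l)), ∑ π : Perm (Fin (n + l)),
                Phi x r s n l g h
                  (fun i => u (Fin.cast (Nat.add_assoc m n l).symm (σ (Fin.natAdd m (ρ i)))))
                  (fun i => v (Fin.cast (Nat.add_assoc m n l).symm (τ (Fin.natAdd m (π i)))))) *
            (f (fun i => u (Fin.cast (Nat.add_assoc m n l).symm (σ (Fin.castAdd (n + l) i))))
              (fun i => v (Fin.cast (Nat.add_assoc m n l).symm (τ (Fin.castAdd (n + l) i)))) *
             ∏ i : Fin m, ∏ j : Fin (n + l),
               Kf x r s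
                 (u (Fin.cast (Nat.add_assoc m n l).symm (σ (Fin.castAdd (n + l) i))))
                 (v (Fin.cast (Nat.add_assoc m n l).symm (τ (Fin.castAdd (n + l) i))))
                 (u (Fin.cast (Nat.add_assoc m n l).symm (σ (Fin.natAdd m j))))
                 (v (Fin.cast (Nat.add_assoc m n l).symm (τ (Fin.natAdd m j))))) :=
          Finset.sum_congr rfl fun σ _ => Finset.sum_congr rfl fun τ _ => by ring
      _ = ∑ σ : Perm (Fin (m + (n + l))), ∑ τ : Perm (Fin (m + (n + l))),
            Phi x r s n l g h
              (fun i => u (Fin.cast (Nat.add_assoc m n l).symm (σ (Fin.natAdd m i))))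
              (fun i => v (Fin.cast (Nat.add_assoc m n l).symm (τ (Fin.natAdd m i)))) *
            (f (fun i => u (Fin.cast (Nat.add_assoc m n l).symm (σ (Fin.castAdd (n + l) i))))
              (fun i => v (Fin.cast (Nat.add_assoc m n l).symm (τ (Fin.castAdd (n + l) i)))) *
             ∏ i : Fin m, ∏ j : Fin (n + l),
               Kf x r s
                 (u (Fin.cast (Nat.add_assoc m n l).symm (σ (Fin.castAdd (n + l) i))))
                 (v (Fin.cast (Nat.add_assoc m n l).symm (τ (Fin.castAdd (n + l) i))))
                 (u (Fin.cast (Nat.add_assoc m n l).symm (σ (Fin.natAdd m j))))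
                 (v (Fin.cast (Nat.add_assoc m n l).symm (τ (Fin.natAdd m j))))) :=
          absorb (embR m (n + l)) (Fin.natAdd m) (Phi x r s n l g h)
            (fun σ τ =>
              f (fun i => u (Fin.cast (Nat.add_assoc m n l).symm (σ (Fin.castAdd (n + l) i))))
                (fun i => v (Fin.cast (Nat.add_assoc m n l).symm (τ (Fin.castAdd (n + l) i)))) *
              ∏ i : Fin m, ∏ j : Fin (n + l),
                Kf x r s
                  (u (Fin.cast (Nat.add_assoc m n l).symm (σ (Fin.castAdd (n + l) i))))
                  (v (Fin.cast (Nat.add_assoc m n l).symm (τ (Fin.castAdd (n + l) i))))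
                  (u (Fin.cast (Nat.add_assoc m n l).symm (σ (Fin.natAdd m j))))
                  (v (Fin.cast (Nat.add_assoc m n l).symm (τ (Fin.natAdd m j)))))
            (fun ρ j => embR_natAdd ρ j) hPsiR
            (fun i => u (Fin.cast (Nat.add_assoc m n l).symm i))
            (fun i => v (Fin.cast (Nat.add_assoc m n l).symm i))
      _ = _ := by
          refine (Fintype.sum_equiv (Equiv.permCongr (finCongr (Nat.add_assoc m n l)))
            _ _ fun σ => ?_).symm
          refine Fintype.sum_equiv (Equiv.permCongr (finCongr (Nat.add_assoc m n l)))
            _ _ fun τ => ?_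
          simp only [Equiv.permCongr_apply, finCongr_symm, finCongr_apply, castArg1, castArg2,
            castArg3, castCastSymm, Phi, Fin.prod_univ_add, Finset.prod_mul_distrib]
          ring
  rw [hL, hR]
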